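/- Let a, b ∈ ℤ with b ≠ 2a. Then every point (x₁, x₂) ∈ C for which there exist roots of unity ζ₁, ζ₂ and x ∈ ℂ^× with x₁ = ζ₁·x^a and x₂ = ζ₂·x^b satisfies |x₁| = 3^{a/(2a−b)}, the real power of 3 with real exponent a/(2a−b). Consequently, the set of all such points (x₁, x₂) is not dense in C for the topology induced from ℂ × ℂ. -/

import Mathlib

/-- `ζ` is a root of unity in `ℂ`. -/
def IsRootOfUnity (ζ : ℂ) : Prop := ∃ n : ℕ, 0 < n ∧ ζ ^ n = 1

/-- The curve `C = {(x₁, x₂) ∈ ℂ^× × ℂ^× : x₁² = 3·x₂}` inside `ℂ × ℂ`. -/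
def curveC : Set (ℂ × ℂ) := {p : ℂ × ℂ | p.1 ≠ 0 ∧ p.2 ≠ 0 ∧ p.1 ^ 2 = 3 * p.2}

/-- The set of points of `C` lying on the torsion translate of the subtorus
`{(x^a, x^b)}` by some pair of roots of unity. -/
def torsionLocus (a b : ℤ) : Set (ℂ × ℂ) :=
  {p ∈ curveC | ∃ ζ₁ ζ₂ x : ℂ, IsRootOfUnity ζ₁ ∧ IsRootOfUnity ζ₂ ∧ x ≠ 0 ∧
    p.1 = ζ₁ * x ^ a ∧ p.2 = ζ₂ * x ^ b}

lemma abs_of_rootOfUnity {ζ : ℂ} (hζ : IsRootOfUnity ζ) : ‖ζ‖ = 1 := by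
  obtain ⟨n, hn, he⟩ := hζ
  simpa using Complex.norm_eq_one_of_pow_eq_one he hn.ne'

/-- for `b ≠ 2a`, every point of `C` lying on a torsion translate of the
subtorus `{(x^a, x^b)}` has `|x₁| = 3^{a/(2a−b)}`; consequently the set of such points
is not dense in `C` for the topology induced from `ℂ × ℂ`. -/
theorem torsionLocus_abs_eq_and_not_dense (a b : ℤ) (h : b ≠ 2 * a) :
    (∀ p ∈ torsionLocus a b,
        ‖p.1‖ = (3 : ℝ) ^ ((a : ℝ) / (2 * (a : ℝ) - (b : ℝ)))) ∧
    ¬ curveC ⊆ closure (torsionLocus a b) := by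
  have hcr : (2 * (a : ℝ) - (b : ℝ)) ≠ 0 := by
    intro hc
    apply h
    have : (b : ℝ) = ((2 * a : ℤ) : ℝ) := by push_cast; linarith
    exact_mod_cast this
  have habs : ∀ p ∈ torsionLocus a b,
      ‖p.1‖ = (3 : ℝ) ^ ((a : ℝ) / (2 * (a : ℝ) - (b : ℝ))) := by
    rintro p ⟨⟨h1, h2, heq⟩, ζ₁, ζ₂, x, hζ1, hζ2, hx, e1, e2⟩
    set r : ℝ := ‖x‖ with hr
    have hrpos : 0 < r := norm_pos_iff.mpr hx
    have ha1 : ‖p.1‖ = r ^ a := by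
      rw [e1, norm_mul, abs_of_rootOfUnity hζ1, one_mul, norm_zpow]
    have ha2 : ‖p.2‖ = r ^ b := by
      rw [e2, norm_mul, abs_of_rootOfUnity hζ2, one_mul, norm_zpow]
    have hmain : r ^ (2 * a) = 3 * r ^ b := by
      have := congrArg (‖·‖) heq
      rw [norm_pow, norm_mul, ha1, ha2] at this
      rw [show (2 : ℤ) * a = a * 2 by ring, zpow_mul]
      simpa using this
    -- r ^ (2a - b) = 3
    have hkey : r ^ (2 * a - b) = 3 := by
      rw [zpow_sub₀ hrpos.ne', hmain]
      field_simp
    -- switch to rpow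
    have hrp : ∀ n : ℤ, r ^ n = r ^ (n : ℝ) := fun n => (Real.rpow_intCast r n).symm
    have hkey' : r ^ ((2 * (a:ℝ) - b)) = 3 := by
      have := hkey
      rw [hrp] at this
      convert this using 2
      push_cast; ring
    rw [ha1, hrp, ← hkey', ← Real.rpow_mul hrpos.le]
    congr 1
    rw [mul_div_assoc']; exact (mul_div_cancel_left₀ _ hcr).symm
  refine ⟨habs, ?_⟩
  set c : ℝ := (3 : ℝ) ^ ((a : ℝ) / (2 * (a : ℝ) - (b : ℝ))) with hc
  have hcpos : 0 < c := Real.rpow_pos_of_pos (by norm_num) _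
  intro hsub
  have hclosed : IsClosed {q : ℂ × ℂ | ‖q.1‖ = c} :=
    isClosed_eq (continuous_norm.comp continuous_fst) continuous_const
  have hsub2 : torsionLocus a b ⊆ {q : ℂ × ℂ | ‖q.1‖ = c} := fun p hp => habs p hp
  have hcl : closure (torsionLocus a b) ⊆ {q : ℂ × ℂ | ‖q.1‖ = c} :=
    closure_minimal hsub2 hclosed
  set p₀ : ℂ × ℂ := (((c + 1 : ℝ) : ℂ), (((c + 1) ^ 2 / 3 : ℝ) : ℂ)) with hp₀
  have hne : (c + 1 : ℝ) ≠ 0 := by positivity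
  have hmem : p₀ ∈ curveC := by
    refine ⟨?_, ?_, ?_⟩
    · simp only [hp₀, ne_eq, Complex.ofReal_eq_zero]
      positivity
    · simp only [hp₀, ne_eq, Complex.ofReal_eq_zero]
      positivity
    · simp only [hp₀]
      push_cast
      ring
  have := hcl (hsub hmem)
  simp only [hp₀, Set.mem_setOf_eq, Complex.norm_real, Real.norm_eq_abs] at this
  rw [abs_of_pos (by positivity)] at this
  linarith
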